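/- Let S = [[1,1],[0,1]] ∈ M₂(ℂ), let A = { S⁻¹·diag(a,b)·S : a, b ∈ ℂ } ⊆ M₂(ℂ), let ω : M₂(ℂ) → M₂(ℂ) be the map preserving the diagonal entries and sending the off-diagonal entries to zero, and define φ : M₂(ℂ) → M₂(ℂ) by φ(X) = S⁻¹·ω(S·X·S⁻¹)·S. Then φ is a linear idempotent map (φ∘φ = φ) whose range is A, φ(M) = M for every M ∈ A, and φ is an A-bimodule map, i.e. φ(M·X·N) = M·φ(X)·N for all M, N ∈ A and X ∈ M₂(ℂ). -/
import Mathlib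


/-- The matrix `S = [[1,1],[0,1]]`. -/
def exS : Matrix (Fin 2) (Fin 2) ℂ := !![1, 1; 0, 1]

/-- The (non-selfadjoint) operator algebra `A = S⁻¹·{diag(a,b)}·S ⊆ M₂(ℂ)`. -/
noncomputable def exA : Set (Matrix (Fin 2) (Fin 2) ℂ) :=
  {X | ∃ a b : ℂ, X = exS⁻¹ * Matrix.diagonal ![a, b] * exS}

/-- The conditional expectation of `M₂(ℂ)` onto its diagonal. -/
def exOmega (X : Matrix (Fin 2) (Fin 2) ℂ) : Matrix (Fin 2) (Fin 2) ℂ :=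
  Matrix.diagonal X.diag

/-- The map `φ(X) = S⁻¹·ω(S·X·S⁻¹)·S`. -/
noncomputable def exPhi (X : Matrix (Fin 2) (Fin 2) ℂ) : Matrix (Fin 2) (Fin 2) ℂ :=
  exS⁻¹ * exOmega (exS * X * exS⁻¹) * exS

lemma hSinv : exS⁻¹ = !![1, -1; 0, 1] := by
  apply Matrix.inv_eq_right_inv
  ext i j
  fin_cases i <;> fin_cases j <;>
    simp [exS, Matrix.mul_apply, Fin.sum_univ_two, Matrix.one_apply]

lemma exOmega_eq (X : Matrix (Fin 2) (Fin 2) ℂ) :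
    exOmega X = !![X 0 0, 0; 0, X 1 1] := by
  ext i j
  fin_cases i <;> fin_cases j <;>
    simp [exOmega, Matrix.diagonal, Matrix.diag]

lemma exPhi_eq (X : Matrix (Fin 2) (Fin 2) ℂ) :
    exPhi X = !![X 0 0 + X 1 0, X 0 0 + X 1 0 - (X 1 1 - X 1 0);
                 0, X 1 1 - X 1 0] := by
  rw [exPhi, exOmega_eq, hSinv]
  ext i j
  fin_cases i <;> fin_cases j <;>
    simp [exS, Matrix.mul_apply, Matrix.vecMul, dotProduct, Fin.sum_univ_two] <;> ring

lemma memA_iff (M : Matrix (Fin 2) (Fin 2) ℂ) :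
    M ∈ exA ↔ ∃ a b : ℂ, M = !![a, a - b; 0, b] := by
  constructor
  · rintro ⟨a, b, rfl⟩
    refine ⟨a, b, ?_⟩
    rw [hSinv]
    ext i j
    fin_cases i <;> fin_cases j <;>
      simp [exS, Matrix.mul_apply, Matrix.vecMul, dotProduct, Matrix.diagonal, Matrix.vecHead, Matrix.vecTail, Fin.sum_univ_two] <;> ring
  · rintro ⟨a, b, rfl⟩
    refine ⟨a, b, ?_⟩
    rw [hSinv]
    ext i j
    fin_cases i <;> fin_cases j <;>
      simp [exS, Matrix.mul_apply, Matrix.vecMul, dotProduct, Matrix.diagonal, Matrix.vecHead, Matrix.vecTail, Fin.sum_univ_two] <;> ring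

theorem exPhi_is_bimodule_projection_onto_exA :
    (∀ X Y : Matrix (Fin 2) (Fin 2) ℂ, exPhi (X + Y) = exPhi X + exPhi Y) ∧
    (∀ (c : ℂ) (X : Matrix (Fin 2) (Fin 2) ℂ), exPhi (c • X) = c • exPhi X) ∧
    (∀ X : Matrix (Fin 2) (Fin 2) ℂ, exPhi (exPhi X) = exPhi X) ∧
    Set.range exPhi = exA ∧
    (∀ M ∈ exA, exPhi M = M) ∧
    (∀ M ∈ exA, ∀ N ∈ exA, ∀ X : Matrix (Fin 2) (Fin 2) ℂ,
      exPhi (M * X * N) = M * exPhi X * N) := by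
  have hfix : ∀ M ∈ exA, exPhi M = M := by
    intro M hM
    rw [memA_iff] at hM
    obtain ⟨a, b, rfl⟩ := hM
    rw [exPhi_eq]
    ext i j
    fin_cases i <;> fin_cases j <;> simp <;> ring_nf
  refine ⟨?_, ?_, ?_, ?_, hfix, ?_⟩
  · intro X Y
    rw [exPhi_eq, exPhi_eq, exPhi_eq]
    ext i j
    fin_cases i <;> fin_cases j <;> simp <;> ring_nf
  · intro c X
    rw [exPhi_eq, exPhi_eq]
    ext i j
    fin_cases i <;> fin_cases j <;> simp <;> ring_nf
  · intro X
    rw [exPhi_eq X, exPhi_eq]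
    ext i j
    fin_cases i <;> fin_cases j <;> simp <;> ring_nf
  · ext M
    constructor
    · rintro ⟨Y, rfl⟩
      rw [memA_iff]
      exact ⟨Y 0 0 + Y 1 0, Y 1 1 - Y 1 0, by rw [exPhi_eq]⟩
    · intro hM
      exact ⟨M, hfix M hM⟩
  · intro M hM N hN X
    rw [memA_iff] at hM hN
    obtain ⟨a, b, rfl⟩ := hM
    obtain ⟨c, d, rfl⟩ := hN
    rw [exPhi_eq, exPhi_eq]
    ext i j
    fin_cases i <;> fin_cases j <;>
      simp [Matrix.mul_apply, Matrix.vecMul, dotProduct, Fin.sum_univ_two] <;> ring
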